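/- Let (F', d'_Q, ω') be a degree-(k+1) Poincaré complex, and let (F, d_Q, ω, π) and (F̃, d̃_Q, ω̃, π̃) be degree-k Poincaré complexes relative to (F', d'_Q, ω'). Suppose f : F → F̃ and g : F̃ → F are chain maps satisfying π̃∘f = π and π∘g = π̃, and H : F^• → F^{•−1}, H̃ : F̃^• → F̃^{•−1} are linear maps satisfying d_Q H + H d_Q = id_F − g∘f, d̃_Q H̃ + H̃ d̃_Q = id_{F̃} − f∘g, π∘H = 0, and π̃∘H̃ = 0. Assume moreover ω̃(f(x), f(y)) = ω(x, y) for all x, y ∈ F. Define β̃ on homogeneous x̃, ỹ ∈ F̃ by β̃(x̃, ỹ) = (−1)^{k+1} [ ( ω̃(H̃ x̃, ỹ) + (−1)^{|x̃|+1} ω̃(x̃, H̃ ỹ) ) + (1/2)( −ω̃(H̃ x̃, H̃ d̃_Q ỹ) + (−1)^{|x̃|} ω̃(H̃ d̃_Q x̃, H̃ ỹ) ) − ω̃(H̃ x̃, d̃_Q H̃ ỹ) ]. Then for all homogeneous x̃, ỹ ∈ F̃ one has ω(g(x̃), g(ỹ)) = ω̃(x̃, ỹ) + (−1)^{k} ( β̃(d̃_Q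 x̃, ỹ) + (−1)^{|x̃|+1} β̃(x̃, d̃_Q ỹ) ). -/
import Mathlib


/-- The relative version of Statement 0: `(F, d, ω, π)` and `(Ft, dt, ωt, πt)` are degree-`k`
Poincaré complexes relative to the same degree-`(k+1)` Poincaré complex `(F', d', ω')`.
Given chain maps `f, g` compatible with `π, πt`, chain homotopies `H, Ht` with
`π∘H = 0`, `πt∘Ht = 0`, and `f` preserving the pairings, the bilinear form `βt` defined by
the explicit formula satisfies `ω(g x, g y) = ωt(x, y) + (L_Q βt)(x, y)`. -/
theorem fiber_product_weak_equivalence_symplectic_correction_relative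
    (k : ℤ)
    (F : ℤ → Type*) [∀ i, AddCommGroup (F i)] [∀ i, Module ℝ (F i)]
    (Ft : ℤ → Type*) [∀ i, AddCommGroup (Ft i)] [∀ i, Module ℝ (Ft i)]
    (F' : ℤ → Type*) [∀ i, AddCommGroup (F' i)] [∀ i, Module ℝ (F' i)]
    -- the differentials (degree +1, squaring to zero)
    (d : ∀ i j : ℤ, j = i + 1 → (F i →ₗ[ℝ] F j))
    (dt : ∀ i j : ℤ, j = i + 1 → (Ft i →ₗ[ℝ] Ft j))
    (d' : ∀ i j : ℤ, j = i + 1 → (F' i →ₗ[ℝ] F' j))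
    (hd2 : ∀ i (x : F i), d (i+1) (i+2) (by omega) (d i (i+1) rfl x) = 0)
    (hdt2 : ∀ i (x : Ft i), dt (i+1) (i+2) (by omega) (dt i (i+1) rfl x) = 0)
    (hd'2 : ∀ i (x : F' i), d' (i+1) (i+2) (by omega) (d' i (i+1) rfl x) = 0)
    -- the pairings: ω, ωt of degree k; ω' of degree k+1
    (ω : ∀ i j : ℤ, i + j = -k → (F i →ₗ[ℝ] F j →ₗ[ℝ] ℝ))
    (ωt : ∀ i j : ℤ, i + j = -k → (Ft i →ₗ[ℝ] Ft j →ₗ[ℝ] ℝ))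
    (ω' : ∀ i j : ℤ, i + j = -(k+1) → (F' i →ₗ[ℝ] F' j →ₗ[ℝ] ℝ))
    -- graded skew-symmetry
    (hω_skew : ∀ i j (h : i + j = -k) (h' : j + i = -k) (x : F i) (y : F j),
        ω i j h x y = -((-1 : ℝ) ^ (i * j)) * ω j i h' y x)
    (hωt_skew : ∀ i j (h : i + j = -k) (h' : j + i = -k) (x : Ft i) (y : Ft j),
        ωt i j h x y = -((-1 : ℝ) ^ (i * j)) * ωt j i h' y x)
    (hω'_skew : ∀ i j (h : i + j = -(k+1)) (h' : j + i = -(k+1)) (x : F' i) (y : F' j),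
        ω' i j h x y = -((-1 : ℝ) ^ (i * j)) * ω' j i h' y x)
    -- nondegeneracy
    (hω_nondeg : ∀ i j (h : i + j = -k) (x : F i),
        (∀ y : F j, ω i j h x y = 0) → x = 0)
    (hωt_nondeg : ∀ i j (h : i + j = -k) (x : Ft i),
        (∀ y : Ft j, ωt i j h x y = 0) → x = 0)
    (hω'_nondeg : ∀ i j (h : i + j = -(k+1)) (x : F' i),
        (∀ y : F' j, ω' i j h x y = 0) → x = 0)
    -- F' is an honest (k+1)-Poincaré complex:  ω'(d' x, y) = (-1)^{|x|} ω'(x, d' y)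
    (hω'_d : ∀ i j (h : i + 1 + j = -(k+1)) (h' : i + (j + 1) = -(k+1)) (x : F' i) (y : F' j),
        ω' (i+1) j h (d' i (i+1) rfl x) y = (-1 : ℝ) ^ i * ω' i (j+1) h' x (d' j (j+1) rfl y))
    -- the chain maps π, πt to the boundary complex
    (π : ∀ i, F i →ₗ[ℝ] F' i) (πt : ∀ i, Ft i →ₗ[ℝ] F' i)
    (hπ : ∀ i (x : F i), π (i+1) (d i (i+1) rfl x) = d' i (i+1) rfl (π i x))
    (hπt : ∀ i (x : Ft i), πt (i+1) (dt i (i+1) rfl x) = d' i (i+1) rfl (πt i x))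
    -- relative compatibility:
    --   ω(d x, y) + (-1)^{|x|+1} ω(x, d y) = (-1)^{k+1} ω'(π x, π y)
    (hω_rel : ∀ i j (h : i + j = -(k+1)) (x : F i) (y : F j),
        ω (i+1) j (by omega) (d i (i+1) rfl x) y
          + (-1 : ℝ) ^ (i+1) * ω i (j+1) (by omega) x (d j (j+1) rfl y)
          = (-1 : ℝ) ^ (k+1) * ω' i j h (π i x) (π j y))
    (hωt_rel : ∀ i j (h : i + j = -(k+1)) (x : Ft i) (y : Ft j),
        ωt (i+1) j (by omega) (dt i (i+1) rfl x) y
          + (-1 : ℝ) ^ (i+1) * ωt i (j+1) (by omega) x (dt j (j+1) rfl y)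
          = (-1 : ℝ) ^ (k+1) * ω' i j h (πt i x) (πt j y))
    -- chain maps f, g
    (f : ∀ i, F i →ₗ[ℝ] Ft i) (g : ∀ i, Ft i →ₗ[ℝ] F i)
    (hf : ∀ i (x : F i), f (i+1) (d i (i+1) rfl x) = dt i (i+1) rfl (f i x))
    (hg : ∀ i (x : Ft i), g (i+1) (dt i (i+1) rfl x) = d i (i+1) rfl (g i x))
    -- compatibility with the projections:  πt∘f = π  and  π∘g = πt
    (hπf : ∀ i (x : F i), πt i (f i x) = π i x)
    (hπg : ∀ i (x : Ft i), π i (g i x) = πt i x)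
    -- chain homotopies:  dH + Hd = id - g f  and  dt Ht + Ht dt = id - f g
    (H : ∀ i j : ℤ, j = i - 1 → (F i →ₗ[ℝ] F j))
    (Ht : ∀ i j : ℤ, j = i - 1 → (Ft i →ₗ[ℝ] Ft j))
    (hH : ∀ i (x : F i),
        d (i-1) i (by omega) (H i (i-1) rfl x) + H (i+1) i (by omega) (d i (i+1) rfl x)
          = x - g i (f i x))
    (hHt : ∀ i (x : Ft i),
        dt (i-1) i (by omega) (Ht i (i-1) rfl x) + Ht (i+1) i (by omega) (dt i (i+1) rfl x)
          = x - f i (g i x))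
    -- π∘H = 0 and πt∘Ht = 0
    (hπH : ∀ i (x : F i), π (i-1) (H i (i-1) rfl x) = 0)
    (hπtHt : ∀ i (x : Ft i), πt (i-1) (Ht i (i-1) rfl x) = 0)
    -- f preserves the pairings:  ωt(f x, f y) = ω(x, y)
    (hfω : ∀ i j (h : i + j = -k) (x : F i) (y : F j),
        ωt i j h (f i x) (f j y) = ω i j h x y)
    -- the degree-(k-1) bilinear form βt defined by the explicit formula
    (βt : ∀ i j : ℤ, i + j = 1 - k → (Ft i →ₗ[ℝ] Ft j →ₗ[ℝ] ℝ))
    (hβ : ∀ i j (h : i + j = 1 - k) (x : Ft i) (y : Ft j),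
        βt i j h x y = (-1 : ℝ) ^ (k+1) *
          ( ( ωt (i-1) j (by omega) (Ht i (i-1) rfl x) y
              + (-1 : ℝ) ^ (i+1) * ωt i (j-1) (by omega) x (Ht j (j-1) rfl y) )
            + (1/2) *
              ( - ωt (i-1) j (by omega) (Ht i (i-1) rfl x)
                    (Ht (j+1) j (by omega) (dt j (j+1) rfl y))
                + (-1 : ℝ) ^ i * ωt i (j-1) (by omega)
                    (Ht (i+1) i (by omega) (dt i (i+1) rfl x)) (Ht j (j-1) rfl y) )
            - ωt (i-1) j (by omega) (Ht i (i-1) rfl x)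
                (dt (j-1) j (by omega) (Ht j (j-1) rfl y)) )) :
    -- conclusion:  ω(g x, g y) = ωt(x, y) + (L_Q βt)(x, y)
    ∀ a b (h : a + b = -k) (x : Ft a) (y : Ft b),
      ω a b h (g a x) (g b y)
        = ωt a b h x y + (-1 : ℝ) ^ k *
            ( βt (a+1) b (by omega) (dt a (a+1) rfl x) y
              + (-1 : ℝ) ^ (a+1) * βt a (b+1) (by omega) x (dt b (b+1) rfl y) ) := by
  intro a b hab x y
  have hne : (-1:ℝ) ≠ 0 := by norm_num
  have hpow : ∀ n : ℤ, (-1:ℝ)^(n+1) = -(-1:ℝ)^n := by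
    intro n; rw [zpow_add_one₀ hne]; ring
  have em : (-1:ℝ)^(a-1) = -(-1:ℝ)^a := by
    have h1 := hpow (a-1)
    rw [show a - 1 + 1 = a from by omega] at h1
    linarith
  -- β with free indices
  have hβ' : ∀ i im ip j jm jp (him : im = i - 1) (hip : ip = i + 1)
      (hjm : jm = j - 1) (hjp : jp = j + 1)
      (hij : i + j = 1 - k) (h1 : im + j = -k) (h2 : i + jm = -k)
      (u : Ft i) (v : Ft j),
      βt i j hij u v = (-1 : ℝ) ^ (k+1) *
        ( ( ωt im j h1 (Ht i im him u) v
            + (-1 : ℝ) ^ (i+1) * ωt i jm h2 u (Ht j jm hjm v) )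
          + (1/2) *
            ( - ωt im j h1 (Ht i im him u) (Ht jp j (by omega) (dt j jp hjp v))
              + (-1 : ℝ) ^ i * ωt i jm h2 (Ht ip i (by omega) (dt i ip hip u)) (Ht j jm hjm v) )
          - ωt im j h1 (Ht i im him u) (dt jm j (by omega) (Ht j jm hjm v)) ) := by
    intro i im ip j jm jp him hip hjm hjp hij h1 h2 u v
    subst him hip hjm hjp
    exact hβ i j hij u v
  -- free-index d² = 0 (first index of outer dt matching)
  have hdd : ∀ i j jp (hj : j = i + 1) (hjp : jp = j + 1) (z : Ft i),
      dt j jp hjp (dt i j hj z) = 0 := by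
    intro i j jp hj hjp z
    subst hj
    have e : i + 2 = jp := by omega
    subst e
    exact hdt2 i z
  -- derived adjunction on ωt when one argument is killed by πt
  have adj : ∀ i ip j jp (hip : ip = i+1) (hjp : jp = j+1)
      (h1 : ip + j = -k) (h2 : i + jp = -k) (u : Ft i) (v : Ft j),
      (πt i u = 0 ∨ πt j v = 0) →
      ωt ip j h1 (dt i ip hip u) v = (-1:ℝ)^i * ωt i jp h2 u (dt j jp hjp v) := by
    intro i ip j jp hip hjp h1 h2 u v huv
    subst hip hjp
    have hrel := hωt_rel i j (by omega) u v
    rcases huv with hu | hv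
    · rw [hu] at hrel
      simp only [map_zero, LinearMap.zero_apply, mul_zero] at hrel
      rw [hpow i] at hrel
      linear_combination hrel
    · rw [hv] at hrel
      simp only [map_zero, mul_zero] at hrel
      rw [hpow i] at hrel
      linear_combination hrel
  have p1 : (a-1) + (b+1) = -k := by omega
  have p2 : (a+1) + (b-1) = -k := by omega
  -- facts
  have fact1 := adj (a-1) a b (b+1) (by omega) rfl hab p1 (Ht a (a-1) rfl x) y
    (Or.inl (hπtHt a x))
  rw [em] at fact1
  have fact2 := adj a (a+1) (b-1) b rfl (by omega) p2 hab x (Ht b (b-1) rfl y)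
    (Or.inr (hπtHt b y))
  have fact3 := adj (a-1) a b (b+1) (by omega) rfl hab p1 (Ht a (a-1) rfl x)
    (dt (b-1) b (by omega) (Ht b (b-1) rfl y)) (Or.inl (hπtHt a x))
  rw [hdd (b-1) b (b+1) (by omega) rfl (Ht b (b-1) rfl y)] at fact3
  simp only [map_zero, mul_zero] at fact3
  have fact4 := adj (a-1) a b (b+1) (by omega) rfl hab p1 (Ht a (a-1) rfl x)
    (Ht (b+1) b (by omega) (dt b (b+1) rfl y)) (Or.inl (hπtHt a x))
  rw [em] at fact4
  -- express f ∘ g via the homotopy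
  have e1 : x - (dt (a-1) a (by omega) (Ht a (a-1) rfl x)
      + Ht (a+1) a (by omega) (dt a (a+1) rfl x)) = f a (g a x) := by
    rw [hHt a x]; abel
  have e2 : y - (dt (b-1) b (by omega) (Ht b (b-1) rfl y)
      + Ht (b+1) b (by omega) (dt b (b+1) rfl y)) = f b (g b y) := by
    rw [hHt b y]; abel
  rw [← hfω a b hab (g a x) (g b y), ← e1, ← e2]
  rw [hβ' (a+1) a (a+2) b (b-1) (b+1) (by omega) (by omega) (by omega) (by omega)
      (by omega) hab p2 (dt a (a+1) rfl x) y,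
    hβ' a (a-1) (a+1) (b+1) b (b+2) (by omega) (by omega) (by omega) (by omega)
      (by omega) p1 hab x (dt b (b+1) rfl y),
    hdd a (a+1) (a+2) rfl (by omega) x,
    hdd b (b+1) (b+2) rfl (by omega) y]
  simp only [map_sub, map_add, map_zero, LinearMap.sub_apply, LinearMap.add_apply,
    LinearMap.zero_apply, mul_zero, zero_mul, add_zero, zero_add, sub_zero, neg_zero]
  rw [fact1, fact2, fact3, fact4]
  simp only [hpow]
  have hk2 : (-1:ℝ)^k = 1 ∨ (-1:ℝ)^k = -1 := by
    rcases Int.even_or_odd k with h | h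
    · exact Or.inl h.neg_one_zpow
    · exact Or.inr h.neg_one_zpow
  have ha2 : (-1:ℝ)^a = 1 ∨ (-1:ℝ)^a = -1 := by
    rcases Int.even_or_odd a with h | h
    · exact Or.inl h.neg_one_zpow
    · exact Or.inr h.neg_one_zpow
  rcases hk2 with hk | hk <;> rcases ha2 with ha | ha <;> rw [hk, ha] <;> ring
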